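/- Let k ≥ 1 and let G be an invertible symmetric k×k real matrix all of whose diagonal entries equal 2. Let S be the upper triangular k×k matrix with S_{ii} = 1, S_{ij} = G_{ij} for i < j, and S_{ij} = 0 for i > j, so that S + Sᵀ = G. For 0 ≤ j ≤ k−1 set R_j = 1 − G·E_{jj}, where E_{jj} is the matrix with 1 in position (j,j) and 0 elsewhere, and let R = R_{k−1} · R_{k−2} ⋯ R_1 · R_0. Then 1 − R is invertible and (1 − R)⁻¹ · G = Sᵀ; i.e. the Stokes matrix S can be recovered from the Gram matrix G and the composed monodromy R. -/

import Mathlib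

open Matrix

/-- Let `G` be an invertible symmetric real `k × k` matrix with diagonal
entries `2`, let `S` be upper triangular with unit diagonal and `S i j = G i j` for
`i < j`, let `R j = 1 - G * E_{jj}` and `R = R_{k-1} ⋯ R_0`. Then `1 - R` is invertible
and `(1 - R)⁻¹ * G = Sᵀ`. -/
theorem stmt10 (k : ℕ) (hk : 1 ≤ k)
    (G : Matrix (Fin k) (Fin k) ℝ)
    (hGunit : IsUnit G)
    (hsym : G.IsSymm) (hdiag : ∀ i, G i i = 2)
    (S : Matrix (Fin k) (Fin k) ℝ)
    (hS : S = Matrix.of fun i j : Fin k =>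
      if i = j then 1 else if i < j then G i j else 0)
    (R : Fin k → Matrix (Fin k) (Fin k) ℝ)
    (hR : ∀ j, R j = 1 - G * Matrix.single j j 1)
    (P : Matrix (Fin k) (Fin k) ℝ)
    (hP : P = ((List.finRange k).reverse.map R).prod) :
    IsUnit (1 - P) ∧ (1 - P)⁻¹ * G = Sᵀ := by
  have hGsym : ∀ i j, G i j = G j i := fun i j => by
    conv_lhs => rw [← hsym]
    rfl
  have hSdet : S.det = 1 := by
    rw [Matrix.det_of_upperTriangular (M := S) ?ht]
    · simp [hS]
    · intro i j hij
      simp only [hS, Matrix.of_apply]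
      rw [if_neg (by exact fun h => absurd h.symm (ne_of_lt hij)),
        if_neg (by exact fun h => absurd hij (not_lt_of_gt h))]
  have hLdet : (Sᵀ).det = 1 := by rw [Matrix.det_transpose]; exact hSdet
  have hLunit : IsUnit (Sᵀ).det := by rw [hLdet]; exact isUnit_one
  set L : Matrix (Fin k) (Fin k) ℝ := Sᵀ with hLdef
  let Pr : ℕ → Matrix (Fin k) (Fin k) ℝ := fun t =>
    Matrix.of fun i j : Fin k => if i = j ∧ (i : ℕ) < t then 1 else 0
  have hGPr : ∀ (t : ℕ) (i j : Fin k), (G * Pr t) i j = if (j : ℕ) < t then G i j else 0 := by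
    intro t i j
    rw [Matrix.mul_apply]
    rw [Finset.sum_eq_single j]
    · simp only [Pr, Matrix.of_apply]
      by_cases h : (j : ℕ) < t <;> simp [h]
    · intro b _ hb
      simp only [Pr, Matrix.of_apply]
      rw [if_neg (fun h => hb h.1), mul_zero]
    · intro h; exact absurd (Finset.mem_univ j) h
  have key : ∀ t : Fin k,
      Matrix.single t t 1 * (L - G * Pr (t : ℕ)) = Matrix.single t t 1 := by
    intro t
    ext i j
    by_cases hi : i = t
    · subst hi
      rw [Matrix.single_mul_apply_same, one_mul, Matrix.sub_apply, hGPr]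
      by_cases hj : j = i
      · subst hj
        simp only [hLdef, Matrix.transpose_apply, hS, Matrix.of_apply, if_pos rfl]
        rw [if_neg (lt_irrefl _)]
        simp
      · simp only [hLdef, Matrix.transpose_apply, hS, Matrix.of_apply]
        rw [Matrix.single_apply_of_ne _ _ _ _ _ (fun h => hj h.2.symm), if_neg hj]
        by_cases h : (j : ℕ) < (i : ℕ)
        · rw [if_pos (show j < i from h), if_pos h, hGsym j i, sub_self]
        · rw [if_neg (show ¬ j < i from h), if_neg h, sub_zero]
    · rw [Matrix.single_mul_apply_of_ne (c := (1:ℝ)) t t i j hi,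
        Matrix.single_apply_of_ne _ _ _ _ _ (fun h => hi h.1.symm)]
  have main : ∀ t : ℕ, t ≤ k →
      ((((List.finRange k).take t).reverse).map R).prod = 1 - G * Pr t * L⁻¹ := by
    intro t
    induction t with
    | zero =>
      intro _
      have : Pr 0 = 0 := by
        ext i j; simp [Pr]
      simp [this]
    | succ t ih =>
      intro ht
      have htk : t < k := ht
      have hPrev := ih (le_of_lt htk)
      have htake : (List.finRange k).take (t + 1)
          = (List.finRange k).take t ++ [(⟨t, htk⟩ : Fin k)] := by
        rw [List.take_succ]
        congr 1
        rw [List.getElem?_eq_getElem (by simpa using htk)]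
        simp
      set E : Matrix (Fin k) (Fin k) ℝ := Matrix.single (⟨t, htk⟩ : Fin k) ⟨t, htk⟩ 1
        with hE
      have hPrsucc : Pr (t + 1) = Pr t + E := by
        ext i j
        simp only [Pr, Matrix.of_apply, Matrix.add_apply, hE]
        by_cases hij : i = j
        · subst hij
          by_cases h2 : (i : ℕ) = t
          · have hit : i = (⟨t, htk⟩ : Fin k) := Fin.ext h2
            subst hit
            rw [if_pos ⟨rfl, Nat.lt_succ_self t⟩, if_neg (fun h => absurd h.2 (lt_irrefl t)),
              Matrix.single_apply_same, zero_add]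
          · rw [Matrix.single_apply_of_ne _ _ _ _ _
                (fun h => h2 (by rw [← h.1])), add_zero]
            by_cases h1 : (i : ℕ) < t
            · rw [if_pos ⟨rfl, Nat.lt_succ_of_lt h1⟩, if_pos ⟨rfl, h1⟩]
            · rw [if_neg (fun h => absurd (Nat.lt_succ_iff_lt_or_eq.mp h.2) (by tauto)),
                if_neg (fun h => h1 h.2)]
        · rw [if_neg (fun h => hij h.1), if_neg (fun h => hij h.1),
            Matrix.single_apply_of_ne _ _ _ _ _
              (fun h => hij (h.1.symm.trans h.2)), add_zero]
      rw [htake, List.reverse_append]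
      simp only [List.map_cons, List.map_nil, List.reverse_cons, List.reverse_nil,
        List.nil_append, List.prod_cons, List.singleton_append]
      rw [hPrev, hR]
      have hLL : L * L⁻¹ = 1 := Matrix.mul_nonsing_inv _ hLunit
      have h2 : E * L⁻¹ = E - E * (G * Pr t) * L⁻¹ := by
        have hk1 : E * (L - G * Pr t) = E := key ⟨t, htk⟩
        have hEL : E * L = E + E * (G * Pr t) := by
          rw [Matrix.mul_sub] at hk1
          exact sub_eq_iff_eq_add.mp hk1
        calc E * L⁻¹ = (E * L) * L⁻¹ - E * (G * Pr t) * L⁻¹ := by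
              rw [hEL]; noncomm_ring
          _ = E - E * (G * Pr t) * L⁻¹ := by
              rw [Matrix.mul_assoc E L L⁻¹, hLL, Matrix.mul_one]
      rw [hPrsucc]
      have expand : (1 - G * E) * (1 - G * Pr t * L⁻¹)
          = 1 - G * Pr t * L⁻¹ - G * (E - E * (G * Pr t) * L⁻¹) := by
        noncomm_ring
      rw [expand, ← h2]
      noncomm_ring
  -- conclude
  have hfull : Pr k = 1 := by
    ext i j
    simp only [Pr, Matrix.of_apply, Matrix.one_apply]
    by_cases h : i = j
    · rw [if_pos ⟨h, i.isLt⟩, if_pos h]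
    · rw [if_neg (fun hh => h hh.1), if_neg h]
  have hPeq : P = 1 - G * L⁻¹ := by
    rw [hP]
    have := main k le_rfl
    rw [List.take_of_length_le (by simp)] at this
    rw [this, hfull, Matrix.mul_one]
  have h1P : 1 - P = G * L⁻¹ := by rw [hPeq, sub_sub_cancel]
  have hLinvUnit : IsUnit L⁻¹ := Matrix.isUnit_nonsing_inv_iff.mpr
    ((Matrix.isUnit_iff_isUnit_det _).mpr hLunit)
  have hGdet : IsUnit G.det := (Matrix.isUnit_iff_isUnit_det _).mp hGunit
  constructor
  · rw [h1P]; exact hGunit.mul hLinvUnit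
  · rw [h1P, Matrix.mul_inv_rev, Matrix.nonsing_inv_nonsing_inv _ hLunit,
      Matrix.mul_assoc, Matrix.nonsing_inv_mul _ hGdet, Matrix.mul_one]
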